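/- Let c, d ∈ (0,1) with c ≤ p_i ≤ d for each i = 1,…,N, and let 0 ≤ t_i ≤ T for each i and some T. Let 1 ≤ k, 1 ≤ n with k+n ≤ N. Then EXC = q_1 + q_2 + q_3 satisfies EXC ≤ T · ((1 − p_{k+n})/(1 − p_k)) · (d/c) · (1−c)^k · (A − B·(1−c)^{n−1}), where A = 1 + 1/c + k + ((1 − p_k)/(1 − p_{k+n})) · c·k/(1−c) and B = (1 − c/d)·(k+n) + 1/c. -/

import Mathlib

open Finset

lemma mul_le4 {a A b B : ℝ} (ha : 0 ≤ a) (haA : a ≤ A) (hb : b ≤ B) (hB : 0 ≤ B) :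
    a * b ≤ A * B :=
  le_trans (mul_le_mul_of_nonneg_left hb ha) (mul_le_mul_of_nonneg_right haA hB)

lemma step_poly (c d M : ℝ) (hc : 0 < c) (hc1 : c < 1) (hcd : c ≤ d) (hd1 : d < 1)
    (hM : 2 ≤ M) :
    d * M + 1 - M + (M + 1) * (1 - c) ≤ (M * c - (1 - c)) * (1 / c - 1 / d) + 1 / c := by
  have hd0 : 0 < d := lt_of_lt_of_le hc hcd
  have h : (M * c - (1 - c)) * (1 / c - 1 / d) + 1 / c
      = ((M * c - (1 - c)) * (d - c) + d) / (c * d) := by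
    field_simp
  rw [h, le_div_iff₀ (by positivity)]
  nlinarith [mul_nonneg (mul_nonneg hc.le (by linarith : (0:ℝ) ≤ 1 - d))
    (by nlinarith : (0:ℝ) ≤ (1 - c) + M * (d - c))]

lemma key_ineq (c d : ℝ) (hc : 0 < c) (hc1 : c < 1) (hcd : c ≤ d) (hd1 : d < 1)
    (k : ℕ) (hk : 1 ≤ k) (n : ℕ) (hn : 1 ≤ n) :
    d * (∑ l ∈ Finset.Icc (k+1) (k+n-1), (l:ℝ) * (1-c)^(l-1))
      + (∑ l ∈ Finset.Icc (k+1) (k+n-1), (1-c)^(l-1))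
      + ((k:ℝ) + (n:ℝ)) * (1-c)^(k+n-1)
    ≤ (1/c + 1/c^2 + (k:ℝ)/c) * (1-c)^k
      - ((k:ℝ) + (n:ℝ)) * (1/c - 1/d) * (1-c)^(k+n-1)
      - (1-c)^(k+n-1)/c^2 := by
  have hd0 : 0 < d := lt_of_lt_of_le hc hcd
  have hx0 : (0:ℝ) < 1 - c := by linarith
  induction n, hn using Nat.le_induction with
  | base =>
    rw [show k + 1 - 1 = k by omega,
      Finset.Icc_eq_empty (by omega : ¬ k + 1 ≤ k)]
    simp only [Finset.sum_empty, mul_zero, add_zero, zero_add, Nat.cast_one]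
    have hxk : (0:ℝ) ≤ (1-c)^k := by positivity
    have h1 : ((k:ℝ) + 1) ≤ 1/c + 1/c^2 + (k:ℝ)/c - ((k:ℝ)+1) * (1/c - 1/d) - 1/c^2 := by
      have he : 1/c + 1/c^2 + (k:ℝ)/c - ((k:ℝ)+1) * (1/c - 1/d) - 1/c^2 = ((k:ℝ)+1)/d := by
        field_simp
        ring
      rw [he, le_div_iff₀ hd0]
      have : (0:ℝ) ≤ (k:ℝ) := Nat.cast_nonneg k
      nlinarith
    calc ((k:ℝ) + 1) * (1-c)^k
        ≤ (1/c + 1/c^2 + (k:ℝ)/c - ((k:ℝ)+1) * (1/c - 1/d) - 1/c^2) * (1-c)^k :=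
          mul_le_mul_of_nonneg_right h1 hxk
      _ = (1/c + 1/c^2 + (k:ℝ)/c) * (1-c)^k - ((k:ℝ)+1) * (1/c - 1/d) * (1-c)^k
          - (1-c)^k/c^2 := by ring
  | succ n hn ih =>
    have e1 : k + (n+1) - 1 = (k+n-1) + 1 := by omega
    have e2 : k + 1 ≤ (k+n-1) + 1 := by omega
    rw [e1, Finset.sum_Icc_succ_top e2, Finset.sum_Icc_succ_top e2]
    have e3 : (k+n-1) + 1 = k + n := by omega
    rw [e3]
    have e4 : (1-c)^(k+n) = (1-c)^(k+n-1) * (1-c) := by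
      conv_lhs => rw [← e3]
      exact pow_succ _ _
    have hP : (0:ℝ) ≤ (1-c)^(k+n-1) := by positivity
    have hM2 : (2:ℝ) ≤ (k:ℝ) + (n:ℝ) := by
      have h1 : (1:ℝ) ≤ (k:ℝ) := by exact_mod_cast hk
      have h2 : (1:ℝ) ≤ (n:ℝ) := by exact_mod_cast hn
      linarith
    have hstep := step_poly c d ((k:ℝ) + (n:ℝ)) hc hc1 hcd hd1 hM2
    have hstep' := mul_le_mul_of_nonneg_left hstep hP
    set M : ℝ := (k:ℝ) + (n:ℝ) with hMdef
    calc d * ((∑ l ∈ Finset.Icc (k+1) (k+n-1), (l:ℝ) * (1-c)^(l-1)) + ((k+n : ℕ):ℝ) * (1-c)^(k+n-1))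
          + ((∑ l ∈ Finset.Icc (k+1) (k+n-1), (1-c)^(l-1)) + (1-c)^(k+n-1))
          + ((k:ℝ) + ((n+1 : ℕ):ℝ)) * (1-c)^(k+n)
        = (d * (∑ l ∈ Finset.Icc (k+1) (k+n-1), (l:ℝ) * (1-c)^(l-1))
            + (∑ l ∈ Finset.Icc (k+1) (k+n-1), (1-c)^(l-1))
            + M * (1-c)^(k+n-1))
          + (1-c)^(k+n-1) * (d * M + 1 - M + (M + 1) * (1-c)) := by
          rw [e4]; push_cast; ring
      _ ≤ ((1/c + 1/c^2 + (k:ℝ)/c) * (1-c)^k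
            - M * (1/c - 1/d) * (1-c)^(k+n-1)
            - (1-c)^(k+n-1)/c^2)
          + (1-c)^(k+n-1) * ((M * c - (1 - c)) * (1 / c - 1 / d) + 1 / c) :=
          add_le_add ih hstep'
      _ = (1/c + 1/c^2 + (k:ℝ)/c) * (1-c)^k
          - ((k:ℝ) + ((n+1 : ℕ):ℝ)) * (1/c - 1/d) * (1-c)^(k+n)
          - (1-c)^(k+n)/c^2 := by
          rw [e4]
          have hcne : c ≠ 0 := ne_of_gt hc
          have hdne : d ≠ 0 := ne_of_gt hd0
          push_cast
          field_simp
          ring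
noncomputable def q1 (p t : ℕ → ℝ) (k n : ℕ) : ℝ :=
  (∑ i ∈ Finset.Icc 1 (k - 1), t i) * (∏ i ∈ Finset.Icc 1 (k - 1), (1 - p i)) *
      (p (k + n) - p k) +
    (∏ i ∈ Finset.Icc 1 (k - 1), (1 - p i)) * (t (k + n) * p (k + n) - t k * p k)

/-- `q_2 = Σ_{l=k+1}^{k+n−1} Q_{l−1}·p_l·(T_l·(p_k − p_{k+n})/(1 − p_k)
      + (t_{k+n} − t_k)·(1 − p_{k+n})/(1 − p_k))`. -/
noncomputable def q2 (p t : ℕ → ℝ) (k n : ℕ) : ℝ :=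
  ∑ l ∈ Finset.Icc (k + 1) (k + n - 1),
    (∏ i ∈ Finset.Icc 1 (l - 1), (1 - p i)) * p l *
      ((∑ i ∈ Finset.Icc 1 l, t i) * (p k - p (k + n)) / (1 - p k) +
        (t (k + n) - t k) * (1 - p (k + n)) / (1 - p k))

/-- `q_3 = T_{k+n}·Q_{k+n−1}·(p_k − p_{k+n})/(1 − p_k)`. -/
noncomputable def q3 (p t : ℕ → ℝ) (k n : ℕ) : ℝ :=
  (∑ i ∈ Finset.Icc 1 (k + n), t i) * (∏ i ∈ Finset.Icc 1 (k + n - 1), (1 - p i)) *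
    (p k - p (k + n)) / (1 - p k)

set_option maxHeartbeats 1000000 in
/-- If `c ≤ p_i ≤ d` with `c, d ∈ (0,1)` and `0 ≤ t_i ≤ T`, then the excess expected solving
time `EXC = q_1 + q_2 + q_3` caused by interchanging the `k`-th and `(k+n)`-th candidates
satisfies `EXC ≤ T·((1 − p_{k+n})/(1 − p_k))·(d/c)·(1−c)^k·(A − B·(1−c)^{n−1})`, where
`A = 1 + 1/c + k + ((1 − p_k)/(1 − p_{k+n}))·c·k/(1−c)` and `B = (1 − c/d)·(k+n) + 1/c`. -/
theorem excess_upper_bound_general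
    (N : ℕ) (hN : 1 ≤ N) (p t : ℕ → ℝ) (c d T : ℝ)
    (hc : c ∈ Set.Ioo (0 : ℝ) 1) (hd : d ∈ Set.Ioo (0 : ℝ) 1)
    (hp : ∀ i ∈ Finset.Icc 1 N, c ≤ p i ∧ p i ≤ d)
    (ht : ∀ i ∈ Finset.Icc 1 N, 0 ≤ t i ∧ t i ≤ T)
    (k n : ℕ) (hk : 1 ≤ k) (hn : 1 ≤ n) (hkn : k + n ≤ N) :
    q1 p t k n + q2 p t k n + q3 p t k n ≤
      T * ((1 - p (k + n)) / (1 - p k)) * (d / c) * (1 - c) ^ k *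
        ((1 + 1 / c + (k : ℝ) + ((1 - p k) / (1 - p (k + n))) * (c * (k : ℝ) / (1 - c))) -
          ((1 - c / d) * ((k : ℝ) + (n : ℝ)) + 1 / c) * (1 - c) ^ (n - 1)) := by
  obtain ⟨hc0, hc1⟩ := hc
  obtain ⟨hd0, hd1⟩ := hd
  have hx0 : (0:ℝ) < 1 - c := by linarith
  have hkN : k ∈ Finset.Icc 1 N := by simp only [Finset.mem_Icc]; omega
  have hknN : k + n ∈ Finset.Icc 1 N := by simp only [Finset.mem_Icc]; omega
  obtain ⟨hpk1, hpk2⟩ := hp k hkN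
  obtain ⟨hpn1, hpn2⟩ := hp (k+n) hknN
  have hcd : c ≤ d := le_trans hpk1 hpk2
  have h1N : (1:ℕ) ∈ Finset.Icc 1 N := by simp only [Finset.mem_Icc]; omega
  have hT0 : (0:ℝ) ≤ T := le_trans (ht 1 h1N).1 (ht 1 h1N).2
  have h1pk : 0 < 1 - p k := by linarith
  have h1pn : 0 < 1 - p (k+n) := by linarith
  have hr0 : (0:ℝ) ≤ (1 - p (k+n)) / (1 - p k) := by positivity
  have hQ : ∀ m, m ≤ N → 0 ≤ (∏ i ∈ Finset.Icc 1 m, (1 - p i)) ∧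
      (∏ i ∈ Finset.Icc 1 m, (1 - p i)) ≤ (1-c)^m := by
    intro m hm
    have hmem : ∀ i ∈ Finset.Icc 1 m, i ∈ Finset.Icc 1 N := fun i hi =>
      Finset.mem_of_subset (Finset.Icc_subset_Icc_right hm) hi
    have h0 : ∀ i ∈ Finset.Icc 1 m, 0 ≤ 1 - p i := fun i hi => by
      have := (hp i (hmem i hi)).2; linarith
    refine ⟨Finset.prod_nonneg h0, ?_⟩
    calc (∏ i ∈ Finset.Icc 1 m, (1 - p i)) ≤ ∏ _i ∈ Finset.Icc 1 m, (1-c) :=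
          Finset.prod_le_prod h0 (fun i hi => by have := (hp i (hmem i hi)).1; linarith)
      _ = (1-c)^m := by rw [Finset.prod_const, Nat.card_Icc]; norm_num
  have hS : ∀ m, m ≤ N → 0 ≤ (∑ i ∈ Finset.Icc 1 m, t i) ∧
      (∑ i ∈ Finset.Icc 1 m, t i) ≤ (m:ℝ) * T := by
    intro m hm
    have hmem : ∀ i ∈ Finset.Icc 1 m, i ∈ Finset.Icc 1 N := fun i hi =>
      Finset.mem_of_subset (Finset.Icc_subset_Icc_right hm) hi
    refine ⟨Finset.sum_nonneg (fun i hi => (ht i (hmem i hi)).1), ?_⟩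
    calc (∑ i ∈ Finset.Icc 1 m, t i) ≤ ∑ _i ∈ Finset.Icc 1 m, T :=
          Finset.sum_le_sum (fun i hi => (ht i (hmem i hi)).2)
      _ = (m:ℝ) * T := by rw [Finset.sum_const, Nat.card_Icc, nsmul_eq_mul]; norm_num
  have hu : p k - p (k + n) ≤ d * (1 - p (k + n)) := by
    nlinarith [mul_nonneg (show (0:ℝ) ≤ p (k+n) by linarith) h1pk.le,
      mul_le_mul_of_nonneg_right hpk2 h1pn.le]
  -- q1 bound
  have hq1 : q1 p t k n ≤ T * d * (k:ℝ) * (1-c)^(k-1) := by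
    obtain ⟨hQ0, hQle⟩ := hQ (k-1) (by omega)
    obtain ⟨hS0, hSle⟩ := hS (k-1) (by omega)
    have hcast : ((k-1 : ℕ):ℝ) = (k:ℝ) - 1 := by
      rw [Nat.cast_sub hk]; norm_num
    rw [hcast] at hSle
    have hkx : (0:ℝ) ≤ (1-c)^(k-1) := by positivity
    have hk1R : (0:ℝ) ≤ (k:ℝ) - 1 := by
      have : (1:ℝ) ≤ (k:ℝ) := by exact_mod_cast hk
      linarith
    have h1 : (∑ i ∈ Finset.Icc 1 (k-1), t i) * (∏ i ∈ Finset.Icc 1 (k-1), (1 - p i)) *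
        (p (k+n) - p k) ≤ (((k:ℝ)-1) * T * (1-c)^(k-1)) * (d - c) := by
      have := mul_le4 hS0 hSle hQle hkx
      apply mul_le4 (mul_nonneg hS0 hQ0) (by linarith) (by linarith) (by linarith)
    have h2 : (∏ i ∈ Finset.Icc 1 (k-1), (1 - p i)) * (t (k+n) * p (k+n) - t k * p k)
        ≤ (1-c)^(k-1) * (T * d) := by
      apply mul_le4 hQ0 hQle ?_ (by positivity)
      have h3 : t (k+n) * p (k+n) ≤ T * d :=
        mul_le4 (ht (k+n) hknN).1 (ht (k+n) hknN).2 hpn2 hd0.le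
      have h4 : 0 ≤ t k * p k := mul_nonneg (ht k hkN).1 (by linarith)
      linarith
    unfold q1
    nlinarith [h1, h2, mul_nonneg (mul_nonneg (mul_nonneg hT0 hkx) hk1R) hc0.le]
  -- q2 bound
  have hq2 : q2 p t k n ≤ T * ((1 - p (k+n))/(1 - p k)) * d *
      (d * (∑ l ∈ Finset.Icc (k+1) (k+n-1), (l:ℝ) * (1-c)^(l-1))
        + ∑ l ∈ Finset.Icc (k+1) (k+n-1), (1-c)^(l-1)) := by
    unfold q2
    have hterm : ∀ l ∈ Finset.Icc (k+1) (k+n-1),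
        (∏ i ∈ Finset.Icc 1 (l - 1), (1 - p i)) * p l *
          ((∑ i ∈ Finset.Icc 1 l, t i) * (p k - p (k + n)) / (1 - p k) +
            (t (k + n) - t k) * (1 - p (k + n)) / (1 - p k))
        ≤ T * ((1 - p (k+n))/(1 - p k)) * d * (d * ((l:ℝ) * (1-c)^(l-1)) + (1-c)^(l-1)) := by
      intro l hl
      rw [Finset.mem_Icc] at hl
      have hlmem : l ∈ Finset.Icc 1 N := by simp only [Finset.mem_Icc]; omega
      obtain ⟨hpl1, hpl2⟩ := hp l hlmem
      obtain ⟨hQ0, hQle⟩ := hQ (l-1) (by omega)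
      obtain ⟨hS0', hSle'⟩ := hS l (by omega)
      have hlx : (0:ℝ) ≤ (1-c)^(l-1) := by positivity
      have ha : 0 ≤ (∏ i ∈ Finset.Icc 1 (l - 1), (1 - p i)) * p l :=
        mul_nonneg hQ0 (by linarith)
      have haA : (∏ i ∈ Finset.Icc 1 (l - 1), (1 - p i)) * p l ≤ (1-c)^(l-1) * d :=
        mul_le4 hQ0 hQle hpl2 hd0.le
      have hb : (∑ i ∈ Finset.Icc 1 l, t i) * (p k - p (k + n)) / (1 - p k) +
            (t (k + n) - t k) * (1 - p (k + n)) / (1 - p k)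
          ≤ T * ((1 - p (k+n))/(1 - p k)) * (d * (l:ℝ) + 1) := by
        rw [← add_div, show T * ((1 - p (k+n))/(1 - p k)) * (d * (l:ℝ) + 1)
          = (T * (1 - p (k+n)) * (d * (l:ℝ) + 1))/(1 - p k) from by ring]
        gcongr
        have hA1 : (∑ i ∈ Finset.Icc 1 l, t i) * (p k - p (k + n))
            ≤ ((l:ℝ) * T) * (d * (1 - p (k + n))) := mul_le4 hS0' hSle' hu (by positivity)
        have hA2 : (t (k + n) - t k) * (1 - p (k + n)) ≤ T * (1 - p (k + n)) :=
          mul_le_mul_of_nonneg_right (by linarith [(ht (k+n) hknN).2, (ht k hkN).1]) h1pn.le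
        nlinarith [hA1, hA2]
      have hB0 : 0 ≤ T * ((1 - p (k+n))/(1 - p k)) * (d * (l:ℝ) + 1) := by positivity
      calc (∏ i ∈ Finset.Icc 1 (l - 1), (1 - p i)) * p l *
          ((∑ i ∈ Finset.Icc 1 l, t i) * (p k - p (k + n)) / (1 - p k) +
            (t (k + n) - t k) * (1 - p (k + n)) / (1 - p k))
          ≤ ((1-c)^(l-1) * d) * (T * ((1 - p (k+n))/(1 - p k)) * (d * (l:ℝ) + 1)) :=
            mul_le4 ha haA hb hB0
        _ = T * ((1 - p (k+n))/(1 - p k)) * d * (d * ((l:ℝ) * (1-c)^(l-1)) + (1-c)^(l-1)) := by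
            ring
    calc (∑ l ∈ Finset.Icc (k + 1) (k + n - 1),
          (∏ i ∈ Finset.Icc 1 (l - 1), (1 - p i)) * p l *
            ((∑ i ∈ Finset.Icc 1 l, t i) * (p k - p (k + n)) / (1 - p k) +
              (t (k + n) - t k) * (1 - p (k + n)) / (1 - p k)))
        ≤ ∑ l ∈ Finset.Icc (k + 1) (k + n - 1),
            T * ((1 - p (k+n))/(1 - p k)) * d * (d * ((l:ℝ) * (1-c)^(l-1)) + (1-c)^(l-1)) :=
          Finset.sum_le_sum hterm
      _ = T * ((1 - p (k+n))/(1 - p k)) * d *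
          (d * (∑ l ∈ Finset.Icc (k+1) (k+n-1), (l:ℝ) * (1-c)^(l-1))
            + ∑ l ∈ Finset.Icc (k+1) (k+n-1), (1-c)^(l-1)) := by
          rw [← Finset.mul_sum]
          congr 1
          rw [Finset.sum_add_distrib, Finset.mul_sum]
  -- q3 bound
  have hq3 : q3 p t k n ≤ T * ((1 - p (k+n))/(1 - p k)) * d *
      (((k:ℝ) + (n:ℝ)) * (1-c)^(k+n-1)) := by
    unfold q3
    obtain ⟨hQ0, hQle⟩ := hQ (k+n-1) (by omega)
    obtain ⟨hS0', hSle'⟩ := hS (k+n) (by omega)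
    have hcast : ((k+n : ℕ):ℝ) = (k:ℝ) + (n:ℝ) := by push_cast; ring
    rw [hcast] at hSle'
    have hkx : (0:ℝ) ≤ (1-c)^(k+n-1) := by positivity
    have hnum : (∑ i ∈ Finset.Icc 1 (k+n), t i) * (∏ i ∈ Finset.Icc 1 (k+n-1), (1 - p i)) *
        (p k - p (k + n)) ≤ ((((k:ℝ)+(n:ℝ)) * T) * (1-c)^(k+n-1)) * (d * (1 - p (k + n))) := by
      apply mul_le4 (mul_nonneg hS0' hQ0) (mul_le4 hS0' hSle' hQle hkx) hu (by positivity)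
    calc (∑ i ∈ Finset.Icc 1 (k+n), t i) * (∏ i ∈ Finset.Icc 1 (k+n-1), (1 - p i)) *
          (p k - p (k + n)) / (1 - p k)
        ≤ (((((k:ℝ)+(n:ℝ)) * T) * (1-c)^(k+n-1)) * (d * (1 - p (k + n)))) / (1 - p k) := by
          gcongr
      _ = T * ((1 - p (k+n))/(1 - p k)) * d * (((k:ℝ) + (n:ℝ)) * (1-c)^(k+n-1)) := by
          ring
  -- combine with key inequality
  have hkey := key_ineq c d hc0 hc1 hcd hd1 k hk n hn
  have hfac : (0:ℝ) ≤ T * ((1 - p (k+n))/(1 - p k)) * d := by positivity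
  have hmul := mul_le_mul_of_nonneg_left hkey hfac
  have hid : T * ((1 - p (k + n)) / (1 - p k)) * (d / c) * (1 - c) ^ k *
        ((1 + 1 / c + (k : ℝ) + ((1 - p k) / (1 - p (k + n))) * (c * (k : ℝ) / (1 - c))) -
          ((1 - c / d) * ((k : ℝ) + (n : ℝ)) + 1 / c) * (1 - c) ^ (n - 1))
      = T * d * (k:ℝ) * (1-c)^(k-1) + T * ((1 - p (k+n))/(1 - p k)) * d *
          ((1/c + 1/c^2 + (k:ℝ)/c) * (1-c)^k
            - ((k:ℝ) + (n:ℝ)) * (1/c - 1/d) * (1-c)^(k+n-1)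
            - (1-c)^(k+n-1)/c^2) := by
    have e1 : (1-c)^k = (1-c)^(k-1) * (1-c) := by
      conv_lhs => rw [show k = (k-1)+1 by omega]
      exact pow_succ _ _
    have e2 : (1-c)^(k+n-1) = (1-c)^(k-1) * (1-c) * (1-c)^(n-1) := by
      rw [← pow_succ, ← pow_add]
      congr 1
      omega
    rw [e1, e2]
    generalize (1-c)^(k-1) = X1
    generalize (1-c)^(n-1) = X2
    have hcne : c ≠ 0 := ne_of_gt hc0
    have hdne : d ≠ 0 := ne_of_gt hd0
    have hxne : (1:ℝ) - c ≠ 0 := ne_of_gt hx0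
    have hpkne : (1:ℝ) - p k ≠ 0 := ne_of_gt h1pk
    have hpnne : (1:ℝ) - p (k+n) ≠ 0 := ne_of_gt h1pn
    field_simp
    ring
  rw [hid]
  linarith [hq1, hq2, hq3, hmul]
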